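/- Let (A, B, ψ, J, 𝕂) be a reflection bialgebra and let g ∈ A be invertible. Then (A, B, ψ_g, J_g, 𝕂_g) with ψ_g = Ad(g)∘ψ, J_g = (g⊗g)·J·Δ(g)^{-1}, and 𝕂_g = (1⊗g)·𝕂 is again a reflection bialgebra; moreover (ε⊗id)(𝕂_g) = g·(ε⊗id)(𝕂), so the induced basic K-matrix transforms as K ↦ g·K. In particular, the support condition 𝕂_g ∈ B ⊗ A holds automatically. -/

import Mathlib

open TensorProduct

section Defs
variable (k A : Type*) [CommSemiring k] [Semiring A]

section Alg
variable [Algebra k A]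

noncomputable def emb12 : A ⊗[k] A →ₐ[k] A ⊗[k] (A ⊗[k] A) :=
  Algebra.TensorProduct.map (AlgHom.id k A) Algebra.TensorProduct.includeLeft

noncomputable def emb13 : A ⊗[k] A →ₐ[k] A ⊗[k] (A ⊗[k] A) :=
  Algebra.TensorProduct.map (AlgHom.id k A) Algebra.TensorProduct.includeRight

noncomputable def emb23 : A ⊗[k] A →ₐ[k] A ⊗[k] (A ⊗[k] A) :=
  Algebra.TensorProduct.includeRight

noncomputable def flip2 : A ⊗[k] A ≃ₐ[k] A ⊗[k] A := Algebra.TensorProduct.comm k A A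

noncomputable def psiL (ψ : A ≃ₐ[k] A) : A ⊗[k] A →ₐ[k] A ⊗[k] A :=
  Algebra.TensorProduct.map ψ.toAlgHom (AlgHom.id k A)

noncomputable def psiR (ψ : A ≃ₐ[k] A) : A ⊗[k] A →ₐ[k] A ⊗[k] A :=
  Algebra.TensorProduct.map (AlgHom.id k A) ψ.toAlgHom

noncomputable def psiBoth (ψ : A ≃ₐ[k] A) : A ⊗[k] A →ₐ[k] A ⊗[k] A :=
  Algebra.TensorProduct.map ψ.toAlgHom ψ.toAlgHom

noncomputable def sub2 (B : Subalgebra k A) : Submodule k (A ⊗[k] A) :=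
  Submodule.span k {t : A ⊗[k] A | ∃ x ∈ B, ∃ y : A, t = x ⊗ₜ[k] y}

end Alg

variable [Bialgebra k A]

noncomputable def cop : A →ₐ[k] A ⊗[k] A := Bialgebra.comulAlgHom k A

noncomputable def copOp : A →ₐ[k] A ⊗[k] A := (flip2 k A).toAlgHom.comp (cop k A)

noncomputable def cou : A →ₐ[k] k := Bialgebra.counitAlgHom k A

noncomputable def copL : A ⊗[k] A →ₐ[k] A ⊗[k] (A ⊗[k] A) :=
  (Algebra.TensorProduct.assoc k k k A A A).toAlgHom.comp
    (Algebra.TensorProduct.map (cop k A) (AlgHom.id k A))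

noncomputable def copR : A ⊗[k] A →ₐ[k] A ⊗[k] (A ⊗[k] A) :=
  Algebra.TensorProduct.map (AlgHom.id k A) (cop k A)

noncomputable def couL : A ⊗[k] A →ₐ[k] A :=
  (Algebra.TensorProduct.lid k A).toAlgHom.comp
    (Algebra.TensorProduct.map (cou k A) (AlgHom.id k A))

noncomputable def couR : A ⊗[k] A →ₐ[k] A :=
  (Algebra.TensorProduct.rid k k A).toAlgHom.comp
    (Algebra.TensorProduct.map (AlgHom.id k A) (cou k A))

structure QTriangular (R : A ⊗[k] A) : Prop where
  isUnit : IsUnit R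
  intertwine : ∀ x : A, R * cop k A x = copOp k A x * R
  coproduct_left : copL k A R = emb13 k A R * emb23 k A R
  coproduct_right : copR k A R = emb13 k A R * emb12 k A R

end Defs

section QSP
variable (k A : Type*) [CommSemiring k] [Semiring A] [Bialgebra k A]

/-- A twist pair `(ψ, J)`: `J` is a Drinfeld twist and `A^{cop,ψ} = A_J` as
quasitriangular bialgebras. -/
structure TwistPair (R : A ⊗[k] A) (ψ : A ≃ₐ[k] A) (J Jinv : A ⊗[k] A) : Prop where
  mul_inv : J * Jinv = 1
  inv_mul : Jinv * J = 1
  cocycle : emb12 k A J * copL k A J = emb23 k A J * copR k A J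
  counit_left : couL k A J = 1
  counit_right : couR k A J = 1
  compat_coproduct : ∀ x : A, psiBoth k A ψ (copOp k A (ψ.symm x)) = J * cop k A x * Jinv
  compat_R : psiBoth k A ψ (flip2 k A R) = flip2 k A J * R * Jinv

/-- A cylindrical bialgebra `(A, B, ψ, J, K)`. -/
structure Cylindrical (R : A ⊗[k] A) (B : Subalgebra k A) (ψ : A ≃ₐ[k] A)
    (J Jinv : A ⊗[k] A) (K : A) : Prop where
  qt : QTriangular k A R
  coideal : ∀ b ∈ B, cop k A b ∈ sub2 k A B
  twist : TwistPair k A R ψ J Jinv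
  isUnitK : IsUnit K
  intertwine : ∀ b ∈ B, K * b = ψ b * K
  coproduct : cop k A K = Jinv * ((1 : A) ⊗ₜ[k] K) * psiL k A ψ R * (K ⊗ₜ[k] (1 : A))

/-- A reflection bialgebra `(A, B, ψ, J, 𝕂)`, the universal tensor K-matrix `𝕂` being
an element of `B ⊗ A ⊆ A ⊗ A`. -/
structure Reflection (R : A ⊗[k] A) (B : Subalgebra k A) (ψ : A ≃ₐ[k] A)
    (J Jinv : A ⊗[k] A) (TK : A ⊗[k] A) : Prop where
  qt : QTriangular k A R
  coideal : ∀ b ∈ B, cop k A b ∈ sub2 k A B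
  twist : TwistPair k A R ψ J Jinv
  support : TK ∈ sub2 k A B
  isUnitTK : IsUnit TK
  intertwine : ∀ b ∈ B, TK * cop k A b = psiR k A ψ (cop k A b) * TK
  coproduct_left : copL k A TK =
    emb23 k A (flip2 k A (psiL k A ψ R)) * emb13 k A TK * emb23 k A R
  coproduct_right : copR k A TK =
    emb23 k A Jinv * emb13 k A TK * emb23 k A (psiL k A ψ R) * emb12 k A TK

end QSP

section Gauge
variable (k A : Type*) [CommSemiring k] [Semiring A] [Bialgebra k A]

/-- the gauged twist automorphism `ψ_g = Ad(g) ∘ ψ` -/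
noncomputable def gaugePsi (ψ : A ≃ₐ[k] A) (g gInv : A) : A → A :=
  fun x => g * ψ x * gInv

/-- the inverse `ψ_g⁻¹ = ψ⁻¹ ∘ Ad(g)⁻¹` of the gauged twist automorphism -/
noncomputable def gaugePsiInv (ψ : A ≃ₐ[k] A) (g gInv : A) : A → A :=
  fun x => ψ.symm (gInv * x * g)

/-- `ψ_g ⊗ ψ_g = Ad(g ⊗ g) ∘ (ψ ⊗ ψ)` on `A ⊗ A` -/
noncomputable def gaugePsi2 (ψ : A ≃ₐ[k] A) (g gInv : A) : A ⊗[k] A → A ⊗[k] A :=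
  fun u => (g ⊗ₜ[k] g) * psiBoth k A ψ u * (gInv ⊗ₜ[k] gInv)

/-- `id ⊗ ψ_g = Ad(1 ⊗ g) ∘ (id ⊗ ψ)` on `A ⊗ A` -/
noncomputable def gaugePsiRight (ψ : A ≃ₐ[k] A) (g gInv : A) : A ⊗[k] A → A ⊗[k] A :=
  fun u => ((1 : A) ⊗ₜ[k] g) * psiR k A ψ u * ((1 : A) ⊗ₜ[k] gInv)

/-- the gauged Drinfeld twist `J_g = (g ⊗ g) · J · Δ(g)⁻¹` -/
noncomputable def gaugeJ (J : A ⊗[k] A) (g gInv : A) : A ⊗[k] A :=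
  (g ⊗ₜ[k] g) * J * cop k A gInv

/-- the inverse `J_g⁻¹ = Δ(g) · J⁻¹ · (g⁻¹ ⊗ g⁻¹)` of the gauged Drinfeld twist -/
noncomputable def gaugeJinv (Jinv : A ⊗[k] A) (g gInv : A) : A ⊗[k] A :=
  cop k A g * Jinv * (gInv ⊗ₜ[k] gInv)

/-- `R^{ψ_g} = (ψ_g ⊗ id)(R) = (g ⊗ 1) · R^ψ · (g⁻¹ ⊗ 1)` -/
noncomputable def gaugeRpsi (R : A ⊗[k] A) (ψ : A ≃ₐ[k] A) (g gInv : A) : A ⊗[k] A :=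
  (g ⊗ₜ[k] (1 : A)) * psiL k A ψ R * (gInv ⊗ₜ[k] (1 : A))

end Gauge

section GaugeHelpers
variable {k A : Type*} [CommSemiring k] [Semiring A] [Bialgebra k A]

lemma cancel_left' {M : Type*} [Monoid M] {a b : M} (h : a * b = 1) (c : M) :
    a * (b * c) = c := by rw [← mul_assoc, h, one_mul]

lemma comm_left' {M : Type*} [Semigroup M] {a b : M} (h : a * b = b * a) (c : M) :
    a * (b * c) = b * (a * c) := by rw [← mul_assoc, h, mul_assoc]

lemma emb23_apply' (u : A ⊗[k] A) : emb23 k A u = (1 : A) ⊗ₜ[k] u := rfl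

lemma emb12_tmul' (a b : A) : emb12 k A (a ⊗ₜ[k] b) = a ⊗ₜ[k] (b ⊗ₜ[k] (1 : A)) := rfl

lemma emb13_tmul' (a b : A) : emb13 k A (a ⊗ₜ[k] b) = a ⊗ₜ[k] ((1 : A) ⊗ₜ[k] b) := rfl

lemma comm12_3' (u : A ⊗[k] A) (c : A) :
    emb12 k A u * ((1 : A) ⊗ₜ[k] ((1 : A) ⊗ₜ[k] c))
      = ((1 : A) ⊗ₜ[k] ((1 : A) ⊗ₜ[k] c)) * emb12 k A u := by
  induction u using TensorProduct.induction_on with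
  | zero => simp
  | tmul a b => simp [emb12_tmul', Algebra.TensorProduct.tmul_mul_tmul]
  | add x y hx hy => simp [map_add, add_mul, mul_add, hx, hy]

lemma comm13_2' (u : A ⊗[k] A) (c : A) :
    emb13 k A u * ((1 : A) ⊗ₜ[k] (c ⊗ₜ[k] (1 : A)))
      = ((1 : A) ⊗ₜ[k] (c ⊗ₜ[k] (1 : A))) * emb13 k A u := by
  induction u using TensorProduct.induction_on with
  | zero => simp
  | tmul a b => simp [emb13_tmul', Algebra.TensorProduct.tmul_mul_tmul]
  | add x y hx hy => simp [map_add, add_mul, mul_add, hx, hy]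

lemma comm23_1' (u : A ⊗[k] A) (c : A) :
    emb23 k A u * (c ⊗ₜ[k] (1 : A ⊗[k] A))
      = (c ⊗ₜ[k] (1 : A ⊗[k] A)) * emb23 k A u := by
  rw [emb23_apply', Algebra.TensorProduct.tmul_mul_tmul,
    Algebra.TensorProduct.tmul_mul_tmul, one_mul, mul_one, one_mul, mul_one]

lemma copL_tmul_one' (x : A) : copL k A (x ⊗ₜ[k] (1 : A)) = emb12 k A (cop k A x) := by
  show (Algebra.TensorProduct.assoc k k k A A A)
    ((Algebra.TensorProduct.map (cop k A) (AlgHom.id k A)) (x ⊗ₜ[k] 1)) = _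
  simp only [Algebra.TensorProduct.map_tmul, AlgHom.coe_id, id_eq]
  induction (cop k A x) using TensorProduct.induction_on with
  | zero => simp
  | tmul a b => simp [emb12_tmul']
  | add u v hu hv => simp [add_tmul, map_add, hu, hv]

lemma copL_one_tmul' (y : A) :
    copL k A ((1 : A) ⊗ₜ[k] y) = (1 : A) ⊗ₜ[k] ((1 : A) ⊗ₜ[k] y) := by
  show (Algebra.TensorProduct.assoc k k k A A A)
    ((Algebra.TensorProduct.map (cop k A) (AlgHom.id k A)) ((1 : A) ⊗ₜ[k] y)) = _
  simp only [Algebra.TensorProduct.map_tmul, AlgHom.coe_id, id_eq, map_one]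
  rfl

lemma copR_tmul_one' (x : A) :
    copR k A (x ⊗ₜ[k] (1 : A)) = x ⊗ₜ[k] (1 : A ⊗[k] A) := by
  simp [copR, Algebra.TensorProduct.map_tmul, map_one]

lemma copR_one_tmul' (y : A) :
    copR k A ((1 : A) ⊗ₜ[k] y) = emb23 k A (cop k A y) := by
  simp [copR, emb23_apply', Algebra.TensorProduct.map_tmul]

lemma coassoc'' (x : A) : copL k A (cop k A x) = copR k A (cop k A x) := by
  have h := Coalgebra.coassoc_apply (R := k) (A := A) x
  have e1 : copL k A (cop k A x)
      = (TensorProduct.assoc k A A A)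
          ((LinearMap.rTensor A Coalgebra.comul) (Coalgebra.comul x)) := rfl
  have e2 : copR k A (cop k A x)
      = (LinearMap.lTensor A Coalgebra.comul) (Coalgebra.comul x) := rfl
  rw [e1, e2, h]

end GaugeHelpers

/-- Gauge transformation of a reflection bialgebra: if
`(A, B, ψ, J, 𝕂)` is a reflection bialgebra and `g ∈ A` is invertible, then
`(A, B, ψ_g, J_g, 𝕂_g)` with `ψ_g = Ad(g)∘ψ`, `J_g = (g⊗g)·J·Δ(g)⁻¹` and
`𝕂_g = (1⊗g)·𝕂` is again a reflection bialgebra; moreover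
`(ε⊗id)(𝕂_g) = g·(ε⊗id)(𝕂)`, and the support condition `𝕂_g ∈ B ⊗ A` holds. -/
theorem reflection_gauge_transformation
    {k A : Type*} [Field k] [Ring A] [Bialgebra k A]
    (R : A ⊗[k] A) (B : Subalgebra k A) (ψ : A ≃ₐ[k] A) (J Jinv TK : A ⊗[k] A)
    (hrefl : Reflection k A R B ψ J Jinv TK)
    (g gInv : A) (hg : g * gInv = 1) (hg' : gInv * g = 1) :
    -- (ψ_g, J_g) is a twist pair
    (gaugeJ k A J g gInv * gaugeJinv k A Jinv g gInv = 1) ∧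
    (gaugeJinv k A Jinv g gInv * gaugeJ k A J g gInv = 1) ∧
    (emb12 k A (gaugeJ k A J g gInv) * copL k A (gaugeJ k A J g gInv) =
      emb23 k A (gaugeJ k A J g gInv) * copR k A (gaugeJ k A J g gInv)) ∧
    (∀ x : A, gaugePsi2 k A ψ g gInv (copOp k A (gaugePsiInv k A ψ g gInv x)) =
      gaugeJ k A J g gInv * cop k A x * gaugeJinv k A Jinv g gInv) ∧
    (gaugePsi2 k A ψ g gInv (flip2 k A R) =
      flip2 k A (gaugeJ k A J g gInv) * R * gaugeJinv k A Jinv g gInv) ∧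
    -- 𝕂_g is an invertible universal tensor K-matrix for (ψ_g, J_g),
    -- supported on B ⊗ A
    (((1 : A) ⊗ₜ[k] g) * TK ∈ sub2 k A B) ∧
    (IsUnit (((1 : A) ⊗ₜ[k] g) * TK)) ∧
    (∀ b ∈ B, (((1 : A) ⊗ₜ[k] g) * TK) * cop k A b =
      gaugePsiRight k A ψ g gInv (cop k A b) * (((1 : A) ⊗ₜ[k] g) * TK)) ∧
    (copL k A (((1 : A) ⊗ₜ[k] g) * TK) =
      emb23 k A (flip2 k A (gaugeRpsi k A R ψ g gInv)) *
        emb13 k A (((1 : A) ⊗ₜ[k] g) * TK) * emb23 k A R) ∧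
    (copR k A (((1 : A) ⊗ₜ[k] g) * TK) =
      emb23 k A (gaugeJinv k A Jinv g gInv) * emb13 k A (((1 : A) ⊗ₜ[k] g) * TK) *
        emb23 k A (gaugeRpsi k A R ψ g gInv) * emb12 k A (((1 : A) ⊗ₜ[k] g) * TK)) ∧
    -- the induced basic K-matrix transforms as K ↦ g·K
    (couL k A (((1 : A) ⊗ₜ[k] g) * TK) = g * couL k A TK) := by
  classical
  obtain ⟨qt, coideal, twist, support, isUnitTK, intertwine, cpL, cpR⟩ := hrefl
  -- basic cancellation facts
  have hG : (g ⊗ₜ[k] g : A ⊗[k] A) * (gInv ⊗ₜ[k] gInv) = 1 := by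
    rw [Algebra.TensorProduct.tmul_mul_tmul, hg, Algebra.TensorProduct.one_def]
  have hG' : (gInv ⊗ₜ[k] gInv : A ⊗[k] A) * (g ⊗ₜ[k] g) = 1 := by
    rw [Algebra.TensorProduct.tmul_mul_tmul, hg', Algebra.TensorProduct.one_def]
  have hDg : cop k A g * cop k A gInv = 1 := by rw [← map_mul, hg, map_one]
  have hDg' : cop k A gInv * cop k A g = 1 := by rw [← map_mul, hg', map_one]
  have h1g : ((1 : A) ⊗ₜ[k] g : A ⊗[k] A) * ((1 : A) ⊗ₜ[k] gInv) = 1 := by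
    rw [Algebra.TensorProduct.tmul_mul_tmul, one_mul, hg, Algebra.TensorProduct.one_def]
  have h1g' : ((1 : A) ⊗ₜ[k] gInv : A ⊗[k] A) * ((1 : A) ⊗ₜ[k] g) = 1 := by
    rw [Algebra.TensorProduct.tmul_mul_tmul, one_mul, hg', Algebra.TensorProduct.one_def]
  refine ⟨?_, ?_, ?_, ?_, ?_, ?_, ?_, ?_, ?_, ?_, ?_⟩
  · -- J_g * J_g⁻¹ = 1
    simp only [gaugeJ, gaugeJinv, mul_assoc]
    rw [cancel_left' hDg', cancel_left' twist.mul_inv, hG]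
  · -- J_g⁻¹ * J_g = 1
    simp only [gaugeJ, gaugeJinv, mul_assoc]
    rw [cancel_left' hG', cancel_left' twist.inv_mul, hDg]
  · -- cocycle
    have hsplit : (g ⊗ₜ[k] g : A ⊗[k] A) = (g ⊗ₜ[k] (1 : A)) * ((1 : A) ⊗ₜ[k] g) := by
      rw [Algebra.TensorProduct.tmul_mul_tmul, mul_one, one_mul]
    have copLgg : copL k A ((g : A) ⊗ₜ[k] g)
        = emb12 k A (cop k A g) * ((1 : A) ⊗ₜ[k] ((1 : A) ⊗ₜ[k] g)) := by
      rw [hsplit, map_mul, copL_tmul_one', copL_one_tmul']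
    have copRgg : copR k A ((g : A) ⊗ₜ[k] g)
        = (g ⊗ₜ[k] (1 : A ⊗[k] A)) * emb23 k A (cop k A g) := by
      rw [hsplit, map_mul, copR_tmul_one', copR_one_tmul']
    have hE12 : emb12 k A (cop k A gInv) * emb12 k A (cop k A g) = 1 := by
      rw [← map_mul, hDg', map_one]
    have hE23 : emb23 k A (cop k A gInv) * emb23 k A (cop k A g) = 1 := by
      rw [← map_mul, hDg', map_one]
    simp only [gaugeJ, map_mul, copLgg, copRgg, mul_assoc]
    rw [cancel_left' hE12, comm_left' (comm12_3' J g),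
      comm_left' (comm12_3' ((g : A) ⊗ₜ[k] g) g), coassoc'',
      ← mul_assoc (emb12 k A J) (copL k A J), twist.cocycle,
      comm_left' (comm23_1' (cop k A gInv) g), cancel_left' hE23,
      comm_left' (comm23_1' J g), comm_left' (comm23_1' ((g : A) ⊗ₜ[k] g) g)]
    simp only [mul_assoc]
    rw [← mul_assoc, ← mul_assoc ((g : A) ⊗ₜ[k] (1 : A ⊗[k] A))]
    congr 1
    simp [emb12_tmul', emb23_apply', Algebra.TensorProduct.tmul_mul_tmul]
  · -- compat_coproduct
    intro x
    simp only [gaugePsi2, gaugePsiInv, gaugeJ, gaugeJinv]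
    rw [twist.compat_coproduct (gInv * x * g), map_mul, map_mul]
    simp only [mul_assoc]
  · -- compat_R
    have hflipgg : flip2 k A ((g : A) ⊗ₜ[k] g) = g ⊗ₜ[k] g := by
      simp [flip2]
    have hflipD : flip2 k A (cop k A gInv) = copOp k A gInv := rfl
    have key : copOp k A gInv * (R * (cop k A g * (Jinv * ((gInv : A) ⊗ₜ[k] gInv))))
        = R * (Jinv * (gInv ⊗ₜ[k] gInv)) := by
      rw [← mul_assoc, ← qt.intertwine, mul_assoc, cancel_left' hDg']
    simp only [gaugePsi2, gaugeJ, gaugeJinv, map_mul, hflipgg, hflipD,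
      twist.compat_R, mul_assoc, key]
  · -- support
    refine Submodule.span_induction (p := fun u _ => ((1 : A) ⊗ₜ[k] g) * u ∈ sub2 k A B)
      ?_ ?_ ?_ ?_ support
    · rintro t ⟨x, hx, y, rfl⟩
      refine Submodule.subset_span ⟨x, hx, g * y, ?_⟩
      rw [Algebra.TensorProduct.tmul_mul_tmul, one_mul]
    · simpa using (sub2 k A B).zero_mem
    · intro u v _ _ hu hv
      rw [mul_add]; exact (sub2 k A B).add_mem hu hv
    · intro a u _ hu
      rw [mul_smul_comm]; exact (sub2 k A B).smul_mem a hu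
  · -- IsUnit
    refine (IsUnit.mul ?_ isUnitTK)
    exact ⟨⟨(1 : A) ⊗ₜ[k] g, (1 : A) ⊗ₜ[k] gInv, h1g, h1g'⟩, rfl⟩
  · -- intertwine
    intro b hb
    rw [mul_assoc, intertwine b hb, ← mul_assoc]
    simp only [gaugePsiRight, mul_assoc]
    rw [cancel_left' h1g']
  · -- coproduct_left
    have hflipR : flip2 k A (gaugeRpsi k A R ψ g gInv)
        = ((1 : A) ⊗ₜ[k] g) * flip2 k A (psiL k A ψ R) * ((1 : A) ⊗ₜ[k] gInv) := by
      simp only [gaugeRpsi, map_mul]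
      rfl
    have h3 : ((1 : A) ⊗ₜ[k] ((1 : A) ⊗ₜ[k] gInv) : A ⊗[k] (A ⊗[k] A))
        * ((1 : A) ⊗ₜ[k] ((1 : A) ⊗ₜ[k] g)) = 1 := by
      simp [Algebra.TensorProduct.tmul_mul_tmul, hg', Algebra.TensorProduct.one_def]
    rw [map_mul, copL_one_tmul', cpL, hflipR, map_mul, map_mul, map_mul,
      emb23_apply' ((1 : A) ⊗ₜ[k] g), emb23_apply' ((1 : A) ⊗ₜ[k] gInv),
      emb13_tmul' 1 g]
    simp only [mul_assoc]
    rw [cancel_left' h3]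
  · -- coproduct_right
    have h2 : ((1 : A) ⊗ₜ[k] ((gInv : A) ⊗ₜ[k] gInv) : A ⊗[k] (A ⊗[k] A))
        * ((1 : A) ⊗ₜ[k] ((1 : A) ⊗ₜ[k] g)) = (1 : A) ⊗ₜ[k] (gInv ⊗ₜ[k] (1 : A)) := by
      simp [Algebra.TensorProduct.tmul_mul_tmul, hg']
    have h4 : ((1 : A) ⊗ₜ[k] ((gInv : A) ⊗ₜ[k] (1 : A)) : A ⊗[k] (A ⊗[k] A))
        * ((1 : A) ⊗ₜ[k] ((g : A) ⊗ₜ[k] (1 : A))) = 1 := by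
      simp [Algebra.TensorProduct.tmul_mul_tmul, hg', Algebra.TensorProduct.one_def]
    rw [map_mul, copR_one_tmul', cpR, gaugeJinv, gaugeRpsi, map_mul, map_mul,
      map_mul, map_mul, map_mul, map_mul,
      emb23_apply' ((gInv : A) ⊗ₜ[k] gInv),
      emb23_apply' ((g : A) ⊗ₜ[k] (1 : A)), emb23_apply' ((gInv : A) ⊗ₜ[k] (1 : A)),
      emb13_tmul' 1 g, emb12_tmul' 1 g]
    simp only [mul_assoc]
    rw [← mul_assoc ((1 : A) ⊗ₜ[k] (gInv ⊗ₜ[k] gInv)) ((1 : A) ⊗ₜ[k] ((1 : A) ⊗ₜ[k] g)),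
      h2, comm_left' (comm13_2' TK gInv).symm, cancel_left' h4, cancel_left' h4]
  · -- couL
    rw [map_mul]
    congr 1
    show (Algebra.TensorProduct.lid k A)
      ((Algebra.TensorProduct.map (cou k A) (AlgHom.id k A)) ((1 : A) ⊗ₜ[k] g)) = g
    simp [cou]
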